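/- Consider the single-user coded caching model with L levels, where level i has N_i ∈ ℕ+ files and K_i ∈ ℕ+ users, with N_i ≥ K_i for every i, and memory M ≥ 0. For every b ∈ ℕ+ and every choice of integers s_i with 0 ≤ s_i ≤ K_i for each level i, the optimal rate satisfies b·R*(M) + (Σ_{i=1}^{L} s_i)·M ≥ Σ_{i=1}^{L} min{ s_i·b , N_i } (cut-set lower bound). -/

import Mathlib

/-- A library: each level `i` has `N i` files, and each file is an arbitrary
element of `{0,1}^F`. -/
def SULibrary (L : ℕ) (N : Fin L → ℕ+) (F : ℕ) : Type :=
  (i : Fin L) → Fin (N i) → Fin F → Bool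

/-- A demand vector of the single-user setup: there are `K = K_1 + ⋯ + K_L` caches,
each with a single user attached, and each user demands a level together with a file
index of that level. -/
def SUDemand (L : ℕ) (N Kl : Fin L → ℕ+) : Type :=
  Fin (∑ i, (Kl i : ℕ)) → (i : Fin L) × Fin (N i)

/-- A demand vector is valid if, for each level `i`, exactly `K i` of the users
demand a file of level `i`. -/
def SUValidDemand (L : ℕ) (N Kl : Fin L → ℕ+) (d : SUDemand L N Kl) : Prop :=
  ∀ i : Fin L, (Finset.univ.filter fun k => (d k).1 = i).card = (Kl i : ℕ)

/-- The pair `(R, M)` is achievable in the single-user multi-level coded caching model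
with `L` levels, `N i` files and `K i` users for level `i`: `R, M ≥ 0` and, for every
`ε > 0`, there are a file size `F` and a scheme consisting of placement maps `Z k` into
a set of cardinality at most `2^(M·F)`, encoding maps `X d` into a set of cardinality
at most `2^((R+ε)·F)`, and decoding maps, such that every user correctly recovers its
demanded file for every library and every valid demand vector. -/
def SUAchievable (L : ℕ) (N Kl : Fin L → ℕ+) (R M : ℝ) : Prop :=
  0 ≤ R ∧ 0 ≤ M ∧
  ∀ ε : ℝ, 0 < ε →
    ∃ (F : ℕ+) (zsize xsize : ℕ)
      (Z : Fin (∑ i, (Kl i : ℕ)) → SULibrary L N F → Fin zsize)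
      (X : SUDemand L N Kl → SULibrary L N F → Fin xsize)
      (dec : Fin (∑ i, (Kl i : ℕ)) → SUDemand L N Kl →
        Fin xsize → Fin zsize → (Fin F → Bool)),
      (zsize : ℝ) ≤ (2 : ℝ) ^ (M * (F : ℝ)) ∧
      (xsize : ℝ) ≤ (2 : ℝ) ^ ((R + ε) * (F : ℝ)) ∧
      ∀ (w : SULibrary L N F) (d : SUDemand L N Kl), SUValidDemand L N Kl d →
        ∀ k, dec k d (X d w) (Z k w) = w (d k).1 (d k).2

/-- `R*(M)`: the optimal rate of the single-user setup,
i.e. the infimum of the rates `R` such that `(R, M)` is achievable. -/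
noncomputable def RstarSU (L : ℕ) (N Kl : Fin L → ℕ+) (M : ℝ) : ℝ :=
  sInf {R | SUAchievable L N Kl R M}

open scoped Classical in
/-- The clustering rate of the single-user setup:
`R^SU(M) = ∑_{h ∈ H'} K_h + max{(∑_{i ∈ I'} N_i)/M − 1, 0}`, where
`H' = {h : M < N_h/K_h}` and `I'` is its complement. -/
noncomputable def RSU (L : ℕ) (N Kl : Fin L → ℕ+) (M : ℝ) : ℝ :=
  ∑ h ∈ Finset.univ.filter (fun h : Fin L => M < ((N h : ℕ) : ℝ) / ((Kl h : ℕ) : ℝ)),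
      ((Kl h : ℕ) : ℝ)
  + max ((∑ i ∈ Finset.univ.filter
        (fun i : Fin L => ¬ M < ((N i : ℕ) : ℝ) / ((Kl i : ℕ) : ℝ)),
        ((N i : ℕ) : ℝ)) / M - 1) 0


instance (L : ℕ) (N : Fin L → ℕ+) (F : ℕ) : Fintype (SULibrary L N F) := by
  unfold SULibrary; infer_instance

lemma sulib_card (L : ℕ) (N : Fin L → ℕ+) (F : ℕ) :
    Fintype.card (SULibrary L N F) = 2 ^ (F * ∑ i, (N i : ℕ)) := by
  have : Fintype.card (SULibrary L N F)
      = ∏ i : Fin L, ((2:ℕ) ^ F) ^ ((N i : ℕ)) := by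
    simp [SULibrary, Fintype.card_pi, Fintype.card_fun]
  rw [this, Finset.prod_pow_eq_pow_sum, ← pow_mul]

lemma su_achievable_trivial (L : ℕ) (N Kl : Fin L → ℕ+) (M : ℝ) (hM : 0 ≤ M) :
    SUAchievable L N Kl ((∑ i, (N i : ℕ) : ℕ) : ℝ) M := by
  refine ⟨by positivity, hM, fun ε hε => ?_⟩
  refine ⟨1, 1, Fintype.card (SULibrary L N 1),
    fun _ _ => ⟨0, one_pos⟩,
    fun _ w => (Fintype.equivFin _) w,
    fun k d x _ => ((Fintype.equivFin _).symm x) (d k).1 (d k).2, ?_, ?_, ?_⟩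
  · have : (0:ℝ) ≤ M * ((1:ℕ+):ℝ) := by positivity
    calc ((1:ℕ):ℝ) = (2:ℝ) ^ (0:ℝ) := by norm_num
    _ ≤ (2:ℝ) ^ (M * ((1:ℕ+):ℝ)) := by
        exact Real.rpow_le_rpow_of_exponent_le one_le_two this
  · rw [sulib_card]
    have h1 : (((2:ℕ) ^ (1 * ∑ i, (N i : ℕ)) : ℕ) : ℝ)
        = (2:ℝ) ^ ((∑ i, (N i : ℕ) : ℕ) : ℝ) := by
      rw [one_mul, Nat.cast_pow, Nat.cast_ofNat, Real.rpow_natCast]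
    rw [h1]
    apply Real.rpow_le_rpow_of_exponent_le one_le_two
    have : ((1:ℕ+):ℝ) = 1 := by norm_num
    rw [this, mul_one]
    linarith
  · intro w d _ k; exact congrArg (fun f => f (d k).1 (d k).2) ((Fintype.equivFin _).symm_apply_apply w)

lemma su_bound_of_achievable (L : ℕ) (N Kl : Fin L → ℕ+) (M R : ℝ)
    (b : ℕ+) (s : Fin L → ℕ) (hs : ∀ i, s i ≤ (Kl i : ℕ))
    (hR : SUAchievable L N Kl R M) (ε : ℝ) (hε : 0 < ε) :
    ((∑ i, min (s i * (b:ℕ)) ((N i : ℕ)) : ℕ) : ℝ)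
      ≤ ((b:ℕ):ℝ) * (R + ε) + ((∑ i, s i : ℕ) : ℝ) * M := by
  classical
  obtain ⟨F, zsize, xsize, Z, X, dec, hz, hx, hdec⟩ := hR.2.2 ε hε
  set Tn : ℕ := ∑ i, min (s i * (b:ℕ)) ((N i : ℕ)) with hTn
  set Sn : ℕ := ∑ i, s i with hSn
  have hcard : Fintype.card (Σ i : Fin L, Fin ((Kl i : ℕ))) =
      Fintype.card (Fin (∑ i, (Kl i : ℕ))) := by
    simp [Fintype.card_sigma]
  let e : (Σ i : Fin L, Fin ((Kl i : ℕ))) ≃ Fin (∑ i, (Kl i : ℕ)) :=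
    Fintype.equivOfCardEq hcard
  let dm : Fin (b:ℕ) → (Σ i : Fin L, Fin ((Kl i : ℕ))) → (i : Fin L) × Fin (N i) :=
    fun t σ => ⟨σ.1, ⟨(((σ.2 : ℕ)) * (b:ℕ) + (t : ℕ)) % ((N σ.1 : ℕ)),
      Nat.mod_lt _ (N σ.1).pos⟩⟩
  let d : Fin (b:ℕ) → SUDemand L N Kl := fun t k => dm t (e.symm k)
  have hval : ∀ t, SUValidDemand L N Kl (d t) := by
    intro t i
    have h1 : (Finset.univ.filter fun k => ((d t) k).1 = i)
        = Finset.univ.image (fun j : Fin ((Kl i : ℕ)) => e ⟨i, j⟩) := by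
      ext k
      simp only [Finset.mem_filter, Finset.mem_image, Finset.mem_univ, true_and]
      constructor
      · intro h
        rcases hσ : e.symm k with ⟨i', j'⟩
        have hi : i' = i := by
          have : ((d t) k).1 = i' := by simp only [d, dm, hσ]
          rw [← this]; exact h
        subst hi
        exact ⟨j', by rw [← hσ, Equiv.apply_symm_apply]⟩
      · rintro ⟨j, rfl⟩
        simp only [d, dm, Equiv.symm_apply_apply]
    rw [h1, Finset.card_image_of_injective _ (fun a a' h => by
      simpa using e.injective h)]
    simp
  let D : Type := (i : Fin L) → Fin (min (s i * (b:ℕ)) ((N i : ℕ))) → Fin F → Bool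
  let emb : D → SULibrary L N F := fun ww i m =>
    if h : (m : ℕ) < min (s i * (b:ℕ)) ((N i : ℕ)) then ww i ⟨m, h⟩ else fun _ => false
  let cache : (Σ i : Fin L, Fin (s i)) → Fin (∑ i, (Kl i : ℕ)) :=
    fun p => e ⟨p.1, ⟨(p.2 : ℕ), lt_of_lt_of_le p.2.2 (hs p.1)⟩⟩
  let Φ : D → (Fin (b:ℕ) → Fin xsize) × ((Σ i : Fin L, Fin (s i)) → Fin zsize) :=
    fun ww => (fun t => X (d t) (emb ww), fun p => Z (cache p) (emb ww))
  have hΦ : Function.Injective Φ := by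
    intro ww ww' h
    have hX : ∀ t, X (d t) (emb ww) = X (d t) (emb ww') :=
      fun t => congrFun (congrArg Prod.fst h) t
    have hZ : ∀ p, Z (cache p) (emb ww) = Z (cache p) (emb ww') :=
      fun p => congrFun (congrArg Prod.snd h) p
    funext i m
    have hm1 : (m : ℕ) < s i * (b:ℕ) := lt_of_lt_of_le m.2 (min_le_left _ _)
    have hm2 : (m : ℕ) < (N i : ℕ) := lt_of_lt_of_le m.2 (min_le_right _ _)
    have hj : (m : ℕ) / (b:ℕ) < s i := Nat.div_lt_iff_lt_mul b.pos |>.2 hm1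
    let p : Σ i : Fin L, Fin (s i) := ⟨i, ⟨(m : ℕ) / (b:ℕ), hj⟩⟩
    let t : Fin (b:ℕ) := ⟨(m : ℕ) % (b:ℕ), Nat.mod_lt _ b.pos⟩
    have hd : d t (cache p) = ⟨i, ⟨(m : ℕ), hm2⟩⟩ := by
      show dm t (e.symm (e _)) = _
      rw [Equiv.symm_apply_apply]
      show (⟨i, ⟨((m:ℕ) / (b:ℕ) * (b:ℕ) + (m:ℕ) % (b:ℕ)) % ((N i : ℕ)), _⟩⟩ :
        (i : Fin L) × Fin (N i)) = _
      congr 1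
      apply Fin.ext
      show ((m:ℕ) / (b:ℕ) * (b:ℕ) + (m:ℕ) % (b:ℕ)) % ((N i : ℕ)) = (m:ℕ)
      rw [Nat.div_add_mod', Nat.mod_eq_of_lt hm2]
    have key : ∀ vv : D, emb vv (d t (cache p)).1 (d t (cache p)).2 = vv i m := by
      intro vv
      have : ∀ q : (i : Fin L) × Fin (N i), q = ⟨i, ⟨(m : ℕ), hm2⟩⟩ →
          emb vv q.1 q.2 = vv i m := by
        rintro q rfl
        show emb vv i ⟨(m:ℕ), hm2⟩ = vv i m
        simp only [emb, dif_pos m.2]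
      exact this _ hd
    have e1 := hdec (emb ww) (d t) (hval t) (cache p)
    have e2 := hdec (emb ww') (d t) (hval t) (cache p)
    rw [hX t, hZ p] at e1
    rw [e2] at e1
    rw [key ww', key ww] at e1
    exact e1.symm
  have hcardD : Fintype.card D = 2 ^ (F * Tn) := by
    have : Fintype.card D = ∏ i : Fin L, ((2:ℕ) ^ (F:ℕ)) ^ (min (s i * (b:ℕ)) ((N i : ℕ))) := by
      simp [D, Fintype.card_pi, Fintype.card_fun]
    rw [this, Finset.prod_pow_eq_pow_sum, ← pow_mul, hTn]
  have hcardC : Fintype.card ((Fin (b:ℕ) → Fin xsize) × ((Σ i : Fin L, Fin (s i)) → Fin zsize))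
      = xsize ^ (b:ℕ) * zsize ^ Sn := by
    simp [Fintype.card_fun, Fintype.card_sigma, hSn]
  have hle : (2:ℕ) ^ (F * Tn) ≤ xsize ^ (b:ℕ) * zsize ^ Sn := by
    rw [← hcardD, ← hcardC]
    exact Fintype.card_le_of_injective Φ hΦ
  have hzn : (0:ℝ) ≤ (zsize:ℝ) := Nat.cast_nonneg _
  have hxn : (0:ℝ) ≤ (xsize:ℝ) := Nat.cast_nonneg _
  have hR1 : ((2:ℝ)) ^ ((F * Tn : ℕ) : ℝ) ≤
      ((2:ℝ) ^ ((R + ε) * (F:ℝ))) ^ (b:ℕ) * ((2:ℝ) ^ (M * (F:ℝ))) ^ Sn := by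
    rw [Real.rpow_natCast]
    calc ((2:ℝ)) ^ (F * Tn : ℕ) = (((2:ℕ) ^ (F * Tn) : ℕ) : ℝ) := by push_cast; ring
    _ ≤ ((xsize ^ (b:ℕ) * zsize ^ Sn : ℕ) : ℝ) := by exact_mod_cast hle
    _ = (xsize:ℝ) ^ (b:ℕ) * (zsize:ℝ) ^ Sn := by push_cast; ring
    _ ≤ ((2:ℝ) ^ ((R + ε) * (F:ℝ))) ^ (b:ℕ) * ((2:ℝ) ^ (M * (F:ℝ))) ^ Sn := by
        apply mul_le_mul (pow_le_pow_left₀ hxn hx _) (pow_le_pow_left₀ hzn hz _)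
          (by positivity) (by positivity)
  have hR2 : ((F:ℝ)) * Tn ≤ (R + ε) * (F:ℝ) * (b:ℕ) + M * (F:ℝ) * Sn := by
    have h2 : ((2:ℝ)) ^ (((F:ℝ)) * Tn) ≤
        (2:ℝ) ^ ((R + ε) * (F:ℝ) * (b:ℕ) + M * (F:ℝ) * Sn) := by
      calc ((2:ℝ)) ^ (((F:ℝ)) * Tn) = ((2:ℝ)) ^ ((F * Tn : ℕ) : ℝ) := by push_cast; ring_nf
      _ ≤ ((2:ℝ) ^ ((R + ε) * (F:ℝ))) ^ (b:ℕ) * ((2:ℝ) ^ (M * (F:ℝ))) ^ Sn := hR1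
      _ = (2:ℝ) ^ ((R + ε) * (F:ℝ) * (b:ℕ) + M * (F:ℝ) * Sn) := by
          rw [← Real.rpow_natCast ((2:ℝ) ^ ((R + ε) * (F:ℝ))) (b:ℕ),
            ← Real.rpow_natCast ((2:ℝ) ^ (M * (F:ℝ))) Sn,
            ← Real.rpow_mul (by norm_num), ← Real.rpow_mul (by norm_num),
            ← Real.rpow_add (by norm_num)]
    exact (Real.rpow_le_rpow_left_iff one_lt_two).1 h2
  have hFpos : (0:ℝ) < (F:ℝ) := by exact_mod_cast F.pos
  have : ((F:ℝ)) * ((Tn:ℝ)) ≤ ((F:ℝ)) * (((b:ℕ):ℝ) * (R + ε) + ((Sn:ℝ)) * M) := by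
    calc ((F:ℝ)) * ((Tn:ℝ)) ≤ (R + ε) * (F:ℝ) * (b:ℕ) + M * (F:ℝ) * Sn := hR2
    _ = ((F:ℝ)) * (((b:ℕ):ℝ) * (R + ε) + ((Sn:ℝ)) * M) := by ring
  exact le_of_mul_le_mul_left this hFpos

/-- Cut-set lower bound for the single-user setup: for every `b ∈ ℕ+` and integers
`0 ≤ s_i ≤ K_i`, the optimal rate satisfies
`b·R*(M) + (∑_i s_i)·M ≥ ∑_i min{s_i·b, N_i}`. -/
theorem su_cutset_lower_bound (L : ℕ) (N Kl : Fin L → ℕ+)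
    (hNK : ∀ i, (Kl i : ℕ) ≤ (N i : ℕ)) (M : ℝ) (hM : 0 ≤ M)
    (b : ℕ+) (s : Fin L → ℕ) (hs : ∀ i, s i ≤ (Kl i : ℕ)) :
    ∑ i, min ((s i : ℝ) * ((b : ℕ) : ℝ)) ((N i : ℕ) : ℝ)
      ≤ ((b : ℕ) : ℝ) * RstarSU L N Kl M + (∑ i, (s i : ℝ)) * M := by
  have hb : (0:ℝ) < ((b:ℕ):ℝ) := by exact_mod_cast b.pos
  set Tn : ℕ := ∑ i, min (s i * (b:ℕ)) ((N i : ℕ)) with hTn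
  set Sn : ℕ := ∑ i, s i with hSn
  have hbound : ∀ R ∈ {R | SUAchievable L N Kl R M},
      ((Tn:ℝ) - (Sn:ℝ) * M) / ((b:ℕ):ℝ) ≤ R := by
    intro R hR
    rw [div_le_iff₀ hb]
    have h1 : (Tn:ℝ) ≤ ((b:ℕ):ℝ) * R + (Sn:ℝ) * M := by
      have h2 : ∀ ε : ℝ, 0 < ε → (Tn:ℝ) ≤ ((b:ℕ):ℝ) * R + (Sn:ℝ) * M + ε := by
        intro ε hε
        have := su_bound_of_achievable L N Kl M R b s hs hR (ε / ((b:ℕ):ℝ))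
          (div_pos hε hb)
        rw [← hTn, ← hSn] at this
        calc (Tn:ℝ) ≤ ((b:ℕ):ℝ) * (R + ε / ((b:ℕ):ℝ)) + (Sn:ℝ) * M := this
        _ = ((b:ℕ):ℝ) * R + (Sn:ℝ) * M + ε := by field_simp; ring
      exact le_of_forall_pos_le_add h2
    linarith
  have hne : {R | SUAchievable L N Kl R M}.Nonempty :=
    ⟨_, su_achievable_trivial L N Kl M hM⟩
  have hinf := le_csInf hne hbound
  have hgoal : (Tn:ℝ) ≤ ((b:ℕ):ℝ) * RstarSU L N Kl M + (Sn:ℝ) * M := by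
    rw [div_le_iff₀ hb] at hinf
    unfold RstarSU
    nlinarith [hinf]
  have hc1 : ((Tn:ℕ):ℝ) = ∑ i, min ((s i : ℝ) * ((b:ℕ):ℝ)) (((N i : ℕ)):ℝ) := by
    rw [hTn]; push_cast [Nat.cast_min]; rfl
  have hc2 : ((Sn:ℕ):ℝ) = ∑ i, (s i : ℝ) := by rw [hSn]; push_cast; rfl
  rw [← hc1, ← hc2]
  exact hgoal
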